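/- Let F be a field and let H be an mα×mα matrix over F partitioned into m×m blocks A_{i,j} of size α×α. Then for every j with 2 ≤ j ≤ m, rank(H|_{[j]}) − rank(H|_{[j−1]}) ≥ max( rank(A_{j,j}) − Σ_{ℓ=1}^{j−1} rank(A_{j,ℓ}), 0 ), where [t] = {1, …, t}. -/

import Mathlib

open scoped BigOperators

open Module Matrix

/-- Rank of a column submatrix is at most the rank. -/
lemma rank_submatrix_col_le' {F : Type*} [Field F] {k n n' : Type*}
    [Fintype k] [Fintype n] [Fintype n'] (A : Matrix k n F) (g : n' → n) :
    (A.submatrix id g).rank ≤ A.rank := by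
  rw [Matrix.rank_eq_finrank_span_cols, Matrix.rank_eq_finrank_span_cols]
  refine Submodule.finrank_mono (Submodule.span_mono ?_)
  rintro _ ⟨p, rfl⟩
  exact ⟨g p, rfl⟩

lemma matrix_rank_add_le' {F : Type*} [Field F] {k n : Type*} [Fintype k] [Fintype n]
    (A B : Matrix k n F) : (A + B).rank ≤ A.rank + B.rank := by
  rw [Matrix.rank_eq_finrank_span_cols, Matrix.rank_eq_finrank_span_cols,
    Matrix.rank_eq_finrank_span_cols]
  have h : Submodule.span F (Set.range (A + B)ᵀ) ≤
      Submodule.span F (Set.range Aᵀ) ⊔ Submodule.span F (Set.range Bᵀ) := by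
    rw [Submodule.span_le]
    rintro _ ⟨p, rfl⟩
    have : (A + B)ᵀ p = Aᵀ p + Bᵀ p := rfl
    rw [this]
    exact Submodule.add_mem _ (Submodule.mem_sup_left (Submodule.subset_span ⟨p, rfl⟩))
      (Submodule.mem_sup_right (Submodule.subset_span ⟨p, rfl⟩))
  exact (Submodule.finrank_mono h).trans
    (Submodule.finrank_add_le_finrank_add_finrank _ _)

lemma matrix_rank_sum_le' {F : Type*} [Field F] {k n ι : Type*} [Fintype k] [Fintype n]
    (s : Finset ι) (f : ι → Matrix k n F) :
    (∑ i ∈ s, f i).rank ≤ ∑ i ∈ s, (f i).rank := by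
  classical
  induction s using Finset.cons_induction with
  | empty => simp
  | cons i s hi ih =>
      rw [Finset.sum_cons, Finset.sum_cons]
      exact (matrix_rank_add_le' _ _).trans (add_le_add le_rfl ih)

/-- Rank-nullity for the restriction of a projection to submodules. -/
lemma finrank_eq_map_add_inf_ker {F : Type*} [Field F] {M N : Type*}
    [AddCommGroup M] [Module F M] [AddCommGroup N] [Module F N]
    [FiniteDimensional F M] (π : M →ₗ[F] N) (V : Submodule F M) :
    finrank F V = finrank F (V.map π) + finrank F ↥(V ⊓ LinearMap.ker π) := by
  have h1 := LinearMap.finrank_range_add_finrank_ker (π.domRestrict V)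
  rw [LinearMap.range_domRestrict] at h1
  have h2 : finrank F ↥(LinearMap.ker (π.domRestrict V)) =
      finrank F ↥(V ⊓ LinearMap.ker π) := by
    rw [LinearMap.ker_domRestrict, ← Submodule.map_comap_subtype V (LinearMap.ker π)]
    exact (Submodule.equivMapOfInjective _ (Submodule.injective_subtype V) _).finrank_eq
  rw [h2] at h1
  omega

/-- Key step: restricting rows can decrease the rank difference of nested column spaces. -/
lemma rank_row_restrict' {F : Type*} [Field F] {k k' c c' : Type*}
    [Fintype k] [Fintype k'] [Fintype c] [Fintype c']
    (A : Matrix k c F) (B : Matrix k c' F) (r : k' → k)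
    (hAB : LinearMap.range B.mulVecLin ≤ LinearMap.range A.mulVecLin) :
    B.rank + (A.submatrix r id).rank ≤ A.rank + (B.submatrix r id).rank := by
  set π : (k → F) →ₗ[F] (k' → F) := LinearMap.funLeft F F r with hπ
  have hA : (A.submatrix r id).mulVecLin = π ∘ₗ A.mulVecLin := by
    simpa [show LinearMap.funLeft F F (id : c → c) = LinearMap.id from LinearMap.ext fun g => rfl] using Matrix.mulVecLin_submatrix r (Equiv.refl c) A
  have hB : (B.submatrix r id).mulVecLin = π ∘ₗ B.mulVecLin := by
    simpa [show LinearMap.funLeft F F (id : c' → c') = LinearMap.id from LinearMap.ext fun g => rfl] using Matrix.mulVecLin_submatrix r (Equiv.refl c') B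
  have e1 : A.rank = finrank F (LinearMap.range A.mulVecLin) := rfl
  have e0 : B.rank = finrank F (LinearMap.range B.mulVecLin) := rfl
  have f1 : (A.submatrix r id).rank =
      finrank F ((LinearMap.range A.mulVecLin).map π) := by
    show finrank F (LinearMap.range (A.submatrix r id).mulVecLin) = _
    rw [hA, LinearMap.range_comp]
  have f0 : (B.submatrix r id).rank =
      finrank F ((LinearMap.range B.mulVecLin).map π) := by
    show finrank F (LinearMap.range (B.submatrix r id).mulVecLin) = _
    rw [hB, LinearMap.range_comp]
  have hk : finrank F ↥(LinearMap.range B.mulVecLin ⊓ LinearMap.ker π) ≤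
      finrank F ↥(LinearMap.range A.mulVecLin ⊓ LinearMap.ker π) :=
    Submodule.finrank_mono (inf_le_inf_right _ hAB)
  have k1 := finrank_eq_map_add_inf_ker π (LinearMap.range A.mulVecLin)
  have k0 := finrank_eq_map_add_inf_ker π (LinearMap.range B.mulVecLin)
  rw [e1, e0, f1, f0]
  omega

/-- for a block matrix `H` with `m × m` blocks of size `α × α`, for every
`j` (0-indexed, `j ≥ 1`), the increase in rank from the first `j` thick columns to the
first `j+1` thick columns is at least `max(rank A_{j,j} - ∑_{ℓ<j} rank A_{j,ℓ}, 0)`. -/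
theorem stmt4 (F : Type*) [Field F] (m a : ℕ) (hm : 2 ≤ m) (ha : 1 ≤ a)
    (H : Matrix (Fin m × Fin a) (Fin m × Fin a) F) :
    ∀ j : Fin m, 1 ≤ (j : ℕ) →
      (((H.submatrix id
            (fun p : {p : Fin m × Fin a // (p.1 : ℕ) < (j : ℕ) + 1} =>
              (p : Fin m × Fin a))).rank : ℤ)
        - ((H.submatrix id
            (fun p : {p : Fin m × Fin a // (p.1 : ℕ) < (j : ℕ)} =>
              (p : Fin m × Fin a))).rank : ℤ))
      ≥ max (((Matrix.of fun x y : Fin a => H (j, x) (j, y)).rank : ℤ)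
            - ∑ l ∈ Finset.univ.filter (fun l : Fin m => l < j),
                ((Matrix.of fun x y : Fin a => H (j, x) (l, y)).rank : ℤ)) 0 := by
  intro j hj
  classical
  set M₁ := H.submatrix id
      (fun p : {p : Fin m × Fin a // (p.1 : ℕ) < (j : ℕ) + 1} => (p : Fin m × Fin a)) with hM₁
  set M₀ := H.submatrix id
      (fun p : {p : Fin m × Fin a // (p.1 : ℕ) < (j : ℕ)} => (p : Fin m × Fin a)) with hM₀
  set r : Fin a → Fin m × Fin a := fun x => (j, x) with hr
  set ι : {p : Fin m × Fin a // (p.1 : ℕ) < (j : ℕ)} →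
      {p : Fin m × Fin a // (p.1 : ℕ) < (j : ℕ) + 1} :=
    fun p => ⟨p.1, Nat.lt_succ_of_lt p.2⟩ with hι
  have hM₀M₁ : M₀ = M₁.submatrix id ι := by ext i p; rfl
  -- column spaces are nested
  have hAB : LinearMap.range M₀.mulVecLin ≤ LinearMap.range M₁.mulVecLin := by
    rw [Matrix.range_mulVecLin, Matrix.range_mulVecLin]
    refine Submodule.span_mono ?_
    rintro _ ⟨p, rfl⟩
    exact ⟨ι p, rfl⟩
  -- the key inequality
  have key := rank_row_restrict' M₁ M₀ r hAB
  -- the diagonal block has rank at most that of the restricted top row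
  have hdiag : (Matrix.of fun x y : Fin a => H (j, x) (j, y)).rank ≤
      (M₁.submatrix r id).rank := by
    have hEq : (Matrix.of fun x y : Fin a => H (j, x) (j, y)) =
        (M₁.submatrix r id).submatrix id
          (fun y : Fin a => (⟨(j, y), Nat.lt_succ_of_le le_rfl⟩ :
            {p : Fin m × Fin a // (p.1 : ℕ) < (j : ℕ) + 1})) := by
      ext x y; rfl
    rw [hEq]
    exact rank_submatrix_col_le' _ _
  -- the restricted bottom row decomposes as a sum of blocks
  set E : Fin m → Matrix (Fin a) {p : Fin m × Fin a // (p.1 : ℕ) < (j : ℕ)} F :=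
    fun l => Matrix.of fun y p =>
      if (p : Fin m × Fin a).1 = l ∧ (p : Fin m × Fin a).2 = y then (1 : F) else 0 with hE
  have hterm : ∀ (l : Fin m) (x : Fin a)
      (p : {p : Fin m × Fin a // (p.1 : ℕ) < (j : ℕ)}),
      (((Matrix.of fun x y : Fin a => H (j, x) (l, y)) * E l) x p) =
        if (p : Fin m × Fin a).1 = l then H (j, x) (p : Fin m × Fin a) else 0 := by
    intro l x p
    simp only [Matrix.mul_apply, Matrix.of_apply, hE, mul_ite, mul_one, mul_zero]
    by_cases h : (p : Fin m × Fin a).1 = l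
    · simp only [h, true_and, if_pos]
      rw [Finset.sum_ite_eq (Finset.univ) ((p : Fin m × Fin a).2)
        (fun y => H (j, x) (l, y))]
      simp only [Finset.mem_univ, if_true]
      rw [← h]
    · simp [h]
  have hdecomp : M₀.submatrix r id =
      ∑ l ∈ Finset.univ.filter (fun l : Fin m => l < j),
        (Matrix.of fun x y : Fin a => H (j, x) (l, y)) * E l := by
    ext x p
    rw [Matrix.sum_apply]
    have hsum : ∀ l ∈ Finset.univ.filter (fun l : Fin m => l < j),
        (((Matrix.of fun x y : Fin a => H (j, x) (l, y)) * E l) x p) =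
        if (p : Fin m × Fin a).1 = l then H (j, x) (p : Fin m × Fin a) else 0 :=
      fun l _ => hterm l x p
    rw [Finset.sum_congr rfl hsum, Finset.sum_ite_eq (Finset.univ.filter fun l : Fin m => l < j)
      ((p : Fin m × Fin a).1) (fun _ => H (j, x) (p : Fin m × Fin a))]
    have hmem : (p : Fin m × Fin a).1 ∈ Finset.univ.filter (fun l : Fin m => l < j) := by
      simp only [Finset.mem_filter, Finset.mem_univ, true_and]
      exact Fin.lt_def.mpr p.2
    rw [if_pos hmem]
    rfl
  have hbot : (M₀.submatrix r id).rank ≤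
      ∑ l ∈ Finset.univ.filter (fun l : Fin m => l < j),
        (Matrix.of fun x y : Fin a => H (j, x) (l, y)).rank := by
    rw [hdecomp]
    refine (matrix_rank_sum_le' _ _).trans (Finset.sum_le_sum ?_)
    intro l _
    exact Matrix.rank_mul_le_left _ _
  -- rank monotone between M₀ and M₁
  have hmono : M₀.rank ≤ M₁.rank := by
    rw [hM₀M₁]
    exact rank_submatrix_col_le' _ _
  rw [ge_iff_le, max_le_iff]
  constructor
  · have hcast : ∑ l ∈ Finset.univ.filter (fun l : Fin m => l < j),
        (((Matrix.of fun x y : Fin a => H (j, x) (l, y)).rank : ℤ)) =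
        ((∑ l ∈ Finset.univ.filter (fun l : Fin m => l < j),
          (Matrix.of fun x y : Fin a => H (j, x) (l, y)).rank : ℕ) : ℤ) := by
      push_cast
      rfl
    rw [hcast]
    omega
  · omega
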